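/- If μ is an ergodic shift-invariant Borel probability measure on the full shift Σ_m = {0,...,m-1}^ℕ with continuous functions f₁, f₂ : Σ_m → ℝ, and if for μ-almost every x the limit lim_{n→∞} (1/n) Σ_{k=1}^n f₁(T^k x) f₂(T^{2k} x) exists and equals α, then α = (∫ f₁ dμ)·(∫ f₂ dμ). -/

import Mathlib

open MeasureTheory Filter Finset
open scoped Topology

/-- The shift map on `Σ_m = {0,...,m-1}^ℕ`. -/
def shift {m : ℕ} (x : ℕ → Fin m) : ℕ → Fin m := fun n => x (n + 1)

set_option maxHeartbeats 1000000 in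
set_option synthInstance.maxHeartbeats 400000 in
/-- If `μ` is an ergodic shift-invariant Borel probability measure on `Σ_m` and `f₁, f₂` are
continuous, and for `μ`-a.e. `x` the multiple ergodic average
`(1/n) ∑_{k=1}^n f₁(T^k x) f₂(T^{2k} x)` converges to `α`, then `α = ∫f₁ dμ · ∫f₂ dμ`. -/
theorem ergodic_multiple_average_eq_product_of_integrals
    (m : ℕ) (hm : 2 ≤ m) (μ : Measure (ℕ → Fin m)) [IsProbabilityMeasure μ]
    (hμ : Ergodic shift μ)
    (f₁ f₂ : (ℕ → Fin m) → ℝ) (hf₁ : Continuous f₁) (hf₂ : Continuous f₂)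
    (α : ℝ)
    (h : ∀ᵐ x ∂μ, Tendsto
      (fun n : ℕ => (n : ℝ)⁻¹ * ∑ k ∈ Icc 1 n, f₁ (shift^[k] x) * f₂ (shift^[2 * k] x))
      atTop (nhds α)) :
    α = (∫ x, f₁ x ∂μ) * (∫ x, f₂ x ∂μ) := by
  classical
  have hm0 : 0 < m := by omega
  have : Nonempty (Fin m) := Fin.pos_iff_nonempty.mp hm0
  set T : (ℕ → Fin m) → (ℕ → Fin m) := shift with hTdef
  have hT : MeasurePreserving T μ μ := hμ.toMeasurePreserving
  have hTc : Continuous T := continuous_pi fun n => continuous_apply (n + 1)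
  have hTk : ∀ k : ℕ, MeasurePreserving (T^[k]) μ μ := fun k => hT.iterate k
  -- bounds
  have exB : ∀ f : (ℕ → Fin m) → ℝ, Continuous f → ∃ C : ℝ, 0 ≤ C ∧ ∀ x, ‖f x‖ ≤ C := by
    intro f hf
    obtain ⟨x₀, -, hx₀⟩ := isCompact_univ.exists_isMaxOn Set.univ_nonempty hf.norm.continuousOn
    exact ⟨‖f x₀‖, norm_nonneg _, fun x => hx₀ (Set.mem_univ x)⟩
  obtain ⟨C₁, hC₁0, hC₁⟩ := exB f₁ hf₁
  obtain ⟨C₂, hC₂0, hC₂⟩ := exB f₂ hf₂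
  -- integrability of the terms
  have hckk : ∀ k : ℕ, Continuous fun x => f₁ (T^[k] x) * f₂ (T^[2 * k] x) := fun k =>
    (hf₁.comp (hTc.iterate k)).mul (hf₂.comp (hTc.iterate (2 * k)))
  have hint : ∀ k : ℕ, Integrable (fun x => f₁ (T^[k] x) * f₂ (T^[2 * k] x)) μ := fun k =>
    memLp_one_iff_integrable.mp <| MemLp.of_bound (hckk k).aestronglyMeasurable (C₁ * C₂)
      (Eventually.of_forall fun x => by
        rw [norm_mul]
        exact mul_le_mul (hC₁ _) (hC₂ _) (norm_nonneg _) hC₁0)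
  have hgand : ∀ n : ℕ, Integrable
      (fun x => (n : ℝ)⁻¹ * ∑ k ∈ Icc 1 n, f₁ (T^[k] x) * f₂ (T^[2 * k] x)) μ := fun n =>
    ((integrable_finset_sum _ fun k _ => hint k).const_mul _)
  -- Step B : α is the limit of the integrals of the averages
  have hB : Tendsto
      (fun n : ℕ => ∫ x, (n : ℝ)⁻¹ * ∑ k ∈ Icc 1 n, f₁ (T^[k] x) * f₂ (T^[2 * k] x) ∂μ)
      atTop (𝓝 α) := by
    have := tendsto_integral_of_dominated_convergence (μ := μ)
      (F := fun (n : ℕ) x => (n : ℝ)⁻¹ * ∑ k ∈ Icc 1 n, f₁ (T^[k] x) * f₂ (T^[2 * k] x))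
      (f := fun _ => α) (bound := fun _ => C₁ * C₂)
      (fun n => (hgand n).aestronglyMeasurable) (integrable_const _)
      (fun n => Eventually.of_forall fun x => by
        have h1 : ‖∑ k ∈ Icc 1 n, f₁ (T^[k] x) * f₂ (T^[2 * k] x)‖ ≤ (n : ℝ) * (C₁ * C₂) := by
          calc ‖∑ k ∈ Icc 1 n, f₁ (T^[k] x) * f₂ (T^[2 * k] x)‖
              ≤ ∑ k ∈ Icc 1 n, (C₁ * C₂) := norm_sum_le_of_le _ fun k _ => by
                rw [norm_mul]
                exact mul_le_mul (hC₁ _) (hC₂ _) (norm_nonneg _) hC₁0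
            _ = (n : ℝ) * (C₁ * C₂) := by simp [Nat.card_Icc]
        have hn1 : ((n : ℝ))⁻¹ * (n : ℝ) ≤ 1 := by
          rcases Nat.eq_zero_or_pos n with h0 | h0
          · simp [h0]
          · rw [inv_mul_cancel₀ (Nat.cast_ne_zero.mpr h0.ne')]
        calc ‖(n : ℝ)⁻¹ * ∑ k ∈ Icc 1 n, f₁ (T^[k] x) * f₂ (T^[2 * k] x)‖
            = (n : ℝ)⁻¹ * ‖∑ k ∈ Icc 1 n, f₁ (T^[k] x) * f₂ (T^[2 * k] x)‖ := by
              rw [norm_mul, norm_inv, Real.norm_natCast]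
          _ ≤ (n : ℝ)⁻¹ * ((n : ℝ) * (C₁ * C₂)) := by
              exact mul_le_mul_of_nonneg_left h1 (by positivity)
          _ = ((n : ℝ)⁻¹ * (n : ℝ)) * (C₁ * C₂) := by ring
          _ ≤ 1 * (C₁ * C₂) := mul_le_mul_of_nonneg_right hn1 (by positivity)
          _ = C₁ * C₂ := one_mul _) h
    simpa using this
  -- Step C : compute the integrals using measure preservation
  have hIeq : ∀ k : ℕ, ∫ x, f₁ (T^[k] x) * f₂ (T^[2 * k] x) ∂μ
      = ∫ x, f₁ x * f₂ (T^[k] x) ∂μ := by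
    intro k
    have hg : Continuous fun y => f₁ y * f₂ (T^[k] y) := hf₁.mul (hf₂.comp (hTc.iterate k))
    have hmap := integral_map (μ := μ) (φ := T^[k]) (hTk k).measurable.aemeasurable
      (f := fun y => f₁ y * f₂ (T^[k] y))
      (by rw [(hTk k).map_eq]; exact hg.aestronglyMeasurable)
    rw [(hTk k).map_eq] at hmap
    calc ∫ x, f₁ (T^[k] x) * f₂ (T^[2 * k] x) ∂μ
        = ∫ x, (fun y => f₁ y * f₂ (T^[k] y)) (T^[k] x) ∂μ := by
          refine integral_congr_ae (Eventually.of_forall fun x => ?_)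
          simp only
          rw [two_mul, Function.iterate_add_apply]
      _ = ∫ y, f₁ y * f₂ (T^[k] y) ∂μ := hmap.symm
  -- Step D : the von Neumann mean ergodic theorem in L².
  have h2f₁ : MemLp f₁ 2 μ :=
    MemLp.of_bound hf₁.aestronglyMeasurable C₁ (Eventually.of_forall hC₁)
  have h2f₂ : MemLp f₂ 2 μ :=
    MemLp.of_bound hf₂.aestronglyMeasurable C₂ (Eventually.of_forall hC₂)
  set F₁ : Lp ℝ 2 μ := h2f₁.toLp f₁ with hF₁def
  set F₂ : Lp ℝ 2 μ := h2f₂.toLp f₂ with hF₂def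
  set U : Lp ℝ 2 μ →L[ℝ] Lp ℝ 2 μ :=
    (Lp.compMeasurePreservingₗᵢ (E := ℝ) (p := 2) ℝ T hT).toContinuousLinearMap with hUdef
  have hUnorm : ‖U‖ ≤ 1 := LinearIsometry.norm_toContinuousLinearMap_le _
  have hUae : ∀ g : Lp ℝ 2 μ, ⇑(U g) =ᵐ[μ] ⇑g ∘ T := fun g =>
    Lp.coeFn_compMeasurePreserving g hT
  have hUk : ∀ (k : ℕ) (g : Lp ℝ 2 μ), ⇑(U^[k] g) =ᵐ[μ] ⇑g ∘ T^[k] := by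
    intro k
    induction k with
    | zero => intro g; simp only [Function.iterate_zero, id_eq, Function.comp_id]; exact EventuallyEq.rfl
    | succ k ih =>
      intro g
      have h1 : U^[k + 1] g = U^[k] (U g) := Function.iterate_succ_apply U k g
      have h2 : ⇑(U g) ∘ T^[k] =ᵐ[μ] (⇑g ∘ T) ∘ T^[k] :=
        (hTk k).quasiMeasurePreserving.ae_eq_comp (hUae g)
      have h3 : (⇑g ∘ T) ∘ T^[k] = ⇑g ∘ T^[k + 1] := by
        funext x
        simp only [Function.comp_apply]
        rw [Function.iterate_succ_apply']
      calc ⇑(U^[k + 1] g) = ⇑(U^[k] (U g)) := by rw [h1]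
        _ =ᵐ[μ] ⇑(U g) ∘ T^[k] := ih (U g)
        _ =ᵐ[μ] (⇑g ∘ T) ∘ T^[k] := h2
        _ = ⇑g ∘ T^[k + 1] := h3
  set G : Lp ℝ 2 μ := U F₂ with hGdef
  set K : Submodule ℝ (Lp ℝ 2 μ) := U.eqLocus (1 : Lp ℝ 2 μ →L[ℝ] Lp ℝ 2 μ) with hKdef
  set Q : Lp ℝ 2 μ := (K.orthogonalProjectionOnto G : Lp ℝ 2 μ) with hQdef
  have hMET : Tendsto (fun N => birkhoffAverage ℝ U _root_.id N G) atTop (𝓝 Q) :=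
    U.tendsto_birkhoffAverage_orthogonalProjection hUnorm G
  -- Q is a fixed point, hence a.e. constant
  have hQK : Q ∈ K := (K.orthogonalProjectionOnto G).2
  have hQfix : U Q = Q := hQK
  have hQT : ⇑Q ∘ T =ᵐ[μ] ⇑Q := by
    have := hUae Q
    rw [hQfix] at this
    exact this.symm
  obtain ⟨c, hc⟩ := hμ.ae_eq_const_of_ae_eq_comp_ae (Lp.aestronglyMeasurable Q) hQT
  -- inner products
  have hinner : ∀ g g' : Lp ℝ 2 μ, (inner ℝ g g' : ℝ) = ∫ x, g x * g' x ∂μ := by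
    intro g g'
    rw [L2.inner_def]
    simp [RCLike.inner_apply, mul_comm]
  set one : Lp ℝ 2 μ := (memLp_const (1 : ℝ)).toLp (fun _ => (1 : ℝ)) with honedef
  have hone_ae : ⇑one =ᵐ[μ] fun _ => (1 : ℝ) := MemLp.coeFn_toLp _
  have honeK : one ∈ K := by
    show U one = one
    refine Lp.ext ?_
    calc ⇑(U one) =ᵐ[μ] ⇑one ∘ T := hUae one
      _ =ᵐ[μ] (fun _ => (1 : ℝ)) ∘ T := hT.quasiMeasurePreserving.ae_eq_comp hone_ae
      _ = fun _ => (1 : ℝ) := rfl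
      _ =ᵐ[μ] ⇑one := hone_ae.symm
  -- c = ∫ f₂
  have hQint : ∫ x, Q x ∂μ = c := by
    rw [integral_congr_ae hc]
    simp
  have hGae : ⇑G =ᵐ[μ] f₂ ∘ T := by
    calc ⇑G =ᵐ[μ] ⇑F₂ ∘ T := hUae F₂
      _ =ᵐ[μ] f₂ ∘ T := hT.quasiMeasurePreserving.ae_eq_comp (MemLp.coeFn_toLp h2f₂)
  have hGint : ∫ x, G x ∂μ = ∫ x, f₂ x ∂μ := by
    rw [integral_congr_ae hGae]
    simp only [Function.comp_apply]
    have hmap := integral_map (μ := μ) (φ := T) hT.measurable.aemeasurable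
      (f := f₂) (by rw [hT.map_eq]; exact hf₂.aestronglyMeasurable)
    rw [hT.map_eq] at hmap
    exact hmap.symm
  have hinner_oneQ : (inner ℝ one Q : ℝ) = c := by
    rw [hinner]
    rw [← hQint]
    refine integral_congr_ae ?_
    filter_upwards [hone_ae] with x hx
    rw [hx, one_mul]
  have hinner_oneG : (inner ℝ one G : ℝ) = ∫ x, f₂ x ∂μ := by
    rw [hinner, ← hGint]
    refine integral_congr_ae ?_
    filter_upwards [hone_ae] with x hx
    rw [hx, one_mul]
  have hortho : (inner ℝ one (G - Q) : ℝ) = 0 :=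
    (Submodule.sub_starProjection_mem_orthogonal (K := K) G) one honeK
  have hc_eq : c = ∫ x, f₂ x ∂μ := by
    have : (inner ℝ one G : ℝ) - (inner ℝ one Q : ℝ) = 0 := by
      rw [← inner_sub_right]
      exact hortho
    rw [hinner_oneQ, hinner_oneG] at this
    linarith
  -- limit of the inner products
  have hFQ : (inner ℝ F₁ Q : ℝ) = (∫ x, f₁ x ∂μ) * c := by
    rw [hinner]
    have : ∫ x, F₁ x * Q x ∂μ = ∫ x, f₁ x * c ∂μ := by
      refine integral_congr_ae ?_
      filter_upwards [MemLp.coeFn_toLp h2f₁, hc] with x hx hx'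
      rw [hx, hx']
      rfl
    rw [this, integral_mul_const]
  have hDlim : Tendsto (fun N : ℕ => (inner ℝ F₁ (birkhoffAverage ℝ U _root_.id N G) : ℝ))
      atTop (𝓝 ((∫ x, f₁ x ∂μ) * c)) := by
    rw [← hFQ]
    exact Filter.Tendsto.inner tendsto_const_nhds hMET
  -- identify the inner products with the averaged correlation integrals
  have hterm : ∀ k : ℕ, (inner ℝ F₁ (U^[k] G) : ℝ) = ∫ x, f₁ x * f₂ (T^[k + 1] x) ∂μ := by
    intro k
    rw [hinner]
    refine integral_congr_ae ?_
    have hae : ⇑(U^[k] G) =ᵐ[μ] f₂ ∘ T^[k + 1] := by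
      have h1 : U^[k] G = U^[k + 1] F₂ := (Function.iterate_succ_apply U k F₂).symm
      rw [h1]
      calc ⇑(U^[k + 1] F₂) =ᵐ[μ] ⇑F₂ ∘ T^[k + 1] := hUk (k + 1) F₂
        _ =ᵐ[μ] f₂ ∘ T^[k + 1] :=
          (hTk (k + 1)).quasiMeasurePreserving.ae_eq_comp (MemLp.coeFn_toLp h2f₂)
    filter_upwards [MemLp.coeFn_toLp h2f₁, hae] with x hx hx'
    rw [hx, hx']
    rfl
  have hbirk : ∀ N : ℕ, (inner ℝ F₁ (birkhoffAverage ℝ U _root_.id N G) : ℝ)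
      = (N : ℝ)⁻¹ * ∑ k ∈ Icc 1 N, ∫ x, f₁ x * f₂ (T^[k] x) ∂μ := by
    intro N
    have h1 : birkhoffAverage ℝ U _root_.id N G
        = (N : ℝ)⁻¹ • ∑ k ∈ range N, U^[k] G := by
      simp [birkhoffAverage, birkhoffSum]
    rw [h1, real_inner_smul_right, inner_sum]
    congr 1
    rw [← Finset.Ico_add_one_right_eq_Icc, Finset.sum_Ico_eq_sum_range]
    refine Finset.sum_congr rfl fun k _ => ?_
    rw [hterm k, Nat.add_comm 1 k]
  -- put everything together
  have hB' : Tendsto (fun n : ℕ => (n : ℝ)⁻¹ * ∑ k ∈ Icc 1 n, ∫ x, f₁ x * f₂ (T^[k] x) ∂μ)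
      atTop (𝓝 α) := by
    refine hB.congr fun n => ?_
    rw [integral_const_mul]
    congr 1
    rw [integral_finset_sum _ fun k _ => hint k]
    exact Finset.sum_congr rfl fun k _ => hIeq k
  have hD' : Tendsto (fun n : ℕ => (n : ℝ)⁻¹ * ∑ k ∈ Icc 1 n, ∫ x, f₁ x * f₂ (T^[k] x) ∂μ)
      atTop (𝓝 ((∫ x, f₁ x ∂μ) * c)) := by
    refine hDlim.congr fun N => hbirk N
  have := tendsto_nhds_unique hB' hD'
  rw [this, hc_eq]
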